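/- arXiv:1411.3183 — 8 statements merged into one kernel-verified Lean document; each statement's English description precedes it below -/
import Mathlib

section
/- Let C be a monoidal category, X an object of C, and suppose the coendomorphism object E := cohom(X,X) exists, with coevaluation coev : X ⟶ X ⊗ E. Let Δ : E ⟶ E ⊗ E be the unique morphism with (id_X ⊗ Δ) ∘ coev = α_{X,E,E} ∘ (coev ⊗ id_E) ∘ coev, and let ε : E ⟶ 𝟙 be the unique morphism with (id_X ⊗ ε) ∘ coev equal to the inverse of the right unitor of X. Then (E, Δ, ε) is a comonoid in C, and X with coaction ρ := coev is a right comodule over (E, Δ, ε). -/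
open CategoryTheory MonoidalCategory

/-- Let `E := cohom(X,X)` exist with coevaluation `coev : X ⟶ X ⊗ E`
(universal property `huniv`).  Let `Δ : E ⟶ E ⊗ E` be the (unique) morphism with
`(id_X ⊗ Δ) ∘ coev = α ∘ (coev ⊗ id_E) ∘ coev`, and `ε : E ⟶ 𝟙` the (unique) morphism
with `(id_X ⊗ ε) ∘ coev = (ρ_ X).inv`.  Then `(E, Δ, ε)` is a comonoid and `X` with
coaction `coev` is a right comodule over it. -/
theorem stmt2 {C : Type*} [Category C] [MonoidalCategory C] (X E : C)
    (coev : X ⟶ X ⊗ E)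
    (huniv : ∀ (W : C) (φ : X ⟶ X ⊗ W), ∃! f : E ⟶ W, coev ≫ (X ◁ f) = φ)
    (Δ : E ⟶ E ⊗ E)
    (hΔ : coev ≫ (X ◁ Δ) = coev ≫ (coev ▷ E) ≫ (α_ X E E).hom)
    (ε : E ⟶ 𝟙_ C)
    (hε : coev ≫ (X ◁ ε) = (ρ_ X).inv) :
    -- `(E, Δ, ε)` is a comonoid:
    (Δ ≫ (Δ ▷ E) ≫ (α_ E E E).hom = Δ ≫ (E ◁ Δ)) ∧
    (Δ ≫ (ε ▷ E) = (λ_ E).inv) ∧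
    (Δ ≫ (E ◁ ε) = (ρ_ E).inv) ∧
    -- `X` with coaction `ρ := coev` is a right comodule over `(E, Δ, ε)`:
    (coev ≫ (coev ▷ E) ≫ (α_ X E E).hom = coev ≫ (X ◁ Δ)) ∧
    (coev ≫ (X ◁ ε) = (ρ_ X).inv) := by
  have hext : ∀ {W : C} (f g : E ⟶ W), coev ≫ (X ◁ f) = coev ≫ (X ◁ g) → f = g := by
    intro W f g h
    exact ((huniv W (coev ≫ (X ◁ g))).unique h rfl)
  refine ⟨?_, ?_, ?_, hΔ.symm, hε⟩
  · apply hext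
    simp only [MonoidalCategory.whiskerLeft_comp, reassoc_of% hΔ]
    calc coev ≫ coev ▷ E ≫ (α_ X E E).hom ≫ X ◁ Δ ▷ E ≫ X ◁ (α_ E E E).hom
        = coev ≫ coev ▷ E ≫ (X ◁ Δ) ▷ E ≫ (α_ X (E ⊗ E) E).hom ≫ X ◁ (α_ E E E).hom := by
          rw [associator_naturality_middle_assoc]
      _ = coev ≫ (coev ≫ X ◁ Δ) ▷ E ≫ (α_ X (E ⊗ E) E).hom ≫ X ◁ (α_ E E E).hom := by
          rw [comp_whiskerRight_assoc]
      _ = coev ≫ coev ▷ E ≫ (coev ▷ E) ▷ E ≫ (α_ X E E).hom ▷ E ≫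
            (α_ X (E ⊗ E) E).hom ≫ X ◁ (α_ E E E).hom := by
          rw [hΔ]; simp only [comp_whiskerRight_assoc]
      _ = coev ≫ coev ▷ E ≫ (coev ▷ E) ▷ E ≫ (α_ (X ⊗ E) E E).hom ≫ (α_ X E (E ⊗ E)).hom := by
          rw [pentagon]
      _ = coev ≫ coev ▷ E ≫ (α_ X E E).hom ≫ coev ▷ (E ⊗ E) ≫ (α_ X E (E ⊗ E)).hom := by
          rw [associator_naturality_left_assoc]
      _ = coev ≫ X ◁ Δ ≫ coev ▷ (E ⊗ E) ≫ (α_ X E (E ⊗ E)).hom := by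
          rw [reassoc_of% hΔ]
      _ = coev ≫ coev ▷ E ≫ (X ⊗ E) ◁ Δ ≫ (α_ X E (E ⊗ E)).hom := by
          rw [whisker_exchange_assoc]
      _ = coev ≫ coev ▷ E ≫ (α_ X E E).hom ≫ X ◁ E ◁ Δ := by
          rw [associator_naturality_right]
  · apply hext
    simp only [MonoidalCategory.whiskerLeft_comp, reassoc_of% hΔ]
    calc coev ≫ coev ▷ E ≫ (α_ X E E).hom ≫ X ◁ ε ▷ E
        = coev ≫ (coev ≫ X ◁ ε) ▷ E ≫ (α_ X (𝟙_ C) E).hom := by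
          rw [← associator_naturality_middle, comp_whiskerRight_assoc]
      _ = coev ≫ (ρ_ X).inv ▷ E ≫ (α_ X (𝟙_ C) E).hom := by rw [hε]
      _ = coev ≫ X ◁ (λ_ E).inv := by
          congr 1
          rw [← cancel_mono (X ◁ (λ_ E).hom)]
          simp [triangle]
  · apply hext
    simp only [MonoidalCategory.whiskerLeft_comp, reassoc_of% hΔ]
    calc coev ≫ coev ▷ E ≫ (α_ X E E).hom ≫ X ◁ E ◁ ε
        = coev ≫ coev ▷ E ≫ (X ⊗ E) ◁ ε ≫ (α_ X E (𝟙_ C)).hom := by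
          rw [associator_naturality_right]
      _ = coev ≫ X ◁ ε ≫ coev ▷ (𝟙_ C) ≫ (α_ X E (𝟙_ C)).hom := by
          rw [whisker_exchange_assoc]
      _ = (ρ_ X).inv ≫ coev ▷ (𝟙_ C) ≫ (α_ X E (𝟙_ C)).hom := by rw [reassoc_of% hε]
      _ = coev ≫ (ρ_ (X ⊗ E)).inv ≫ (α_ X E (𝟙_ C)).hom := by
          rw [rightUnitor_inv_naturality_assoc]
      _ = coev ≫ X ◁ (ρ_ E).inv := by
          congr 1; simp
end

section
/- Let C be a monoidal category, (C₀, Δ_{C₀}, ε_{C₀}) a comonoid in C, and X an object such that E := cohom(X,X) exists, equipped with the comonoid structure (Δ_E, ε_E) determined by its universal property (Δ_E is the transpose of α ∘ (coev ⊗ id_E) ∘ coev and ε_E is the transpose of the inverse right unitor). If φ : X ⟶ X ⊗ C₀ is a right comodule coaction of C₀ on X, then the transpose φ̂ : E ⟶ C₀ of φ is a morphism of comonoids: Δ_{C₀} ∘ φ̂ = (φ̂ ⊗ φ̂) ∘ Δ_E and ε_{C₀} ∘ φ̂ = ε_E. -/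
open CategoryTheory MonoidalCategory

/-- Let `(C₀, Δ₀, ε₀)` be a comonoid in a monoidal category `C` and let
`E := cohom(X,X)` exist with coevaluation `coev` (universal property `huniv`), equipped
with the comonoid structure `(ΔE, εE)` determined by its universal property (`hΔE`, `hεE`).
If `φ : X ⟶ X ⊗ C₀` is a right comodule coaction of `C₀` on `X`, then the transpose
`φhat : E ⟶ C₀` of `φ` is a morphism of comonoids. -/
theorem stmt3 {C : Type*} [Category C] [MonoidalCategory C]
    (C₀ : C) (Δ₀ : C₀ ⟶ C₀ ⊗ C₀) (ε₀ : C₀ ⟶ 𝟙_ C)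
    (hΔ₀ : Δ₀ ≫ (Δ₀ ▷ C₀) ≫ (α_ C₀ C₀ C₀).hom = Δ₀ ≫ (C₀ ◁ Δ₀))
    (hε₀l : Δ₀ ≫ (ε₀ ▷ C₀) = (λ_ C₀).inv)
    (hε₀r : Δ₀ ≫ (C₀ ◁ ε₀) = (ρ_ C₀).inv)
    (X E : C) (coev : X ⟶ X ⊗ E)
    (huniv : ∀ (W : C) (ψ : X ⟶ X ⊗ W), ∃! f : E ⟶ W, coev ≫ (X ◁ f) = ψ)
    (ΔE : E ⟶ E ⊗ E)
    (hΔE : coev ≫ (X ◁ ΔE) = coev ≫ (coev ▷ E) ≫ (α_ X E E).hom)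
    (εE : E ⟶ 𝟙_ C)
    (hεE : coev ≫ (X ◁ εE) = (ρ_ X).inv)
    (φ : X ⟶ X ⊗ C₀)
    (hφ_coassoc : φ ≫ (φ ▷ C₀) ≫ (α_ X C₀ C₀).hom = φ ≫ (X ◁ Δ₀))
    (hφ_counit : φ ≫ (X ◁ ε₀) = (ρ_ X).inv)
    (φhat : E ⟶ C₀)
    (hφhat : coev ≫ (X ◁ φhat) = φ) :
    φhat ≫ Δ₀ = ΔE ≫ (φhat ⊗ₘ φhat) ∧ φhat ≫ ε₀ = εE := by
  constructor
  · obtain ⟨f, hf, hu⟩ := huniv (C₀ ⊗ C₀) (φ ≫ (X ◁ Δ₀))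
    have h1 : coev ≫ (X ◁ (φhat ≫ Δ₀)) = φ ≫ (X ◁ Δ₀) := by
      rw [MonoidalCategory.whiskerLeft_comp, ← Category.assoc, hφhat]
    have h2 : coev ≫ (X ◁ (ΔE ≫ (φhat ⊗ₘ φhat))) = φ ≫ (X ◁ Δ₀) := by
      rw [MonoidalCategory.whiskerLeft_comp, ← Category.assoc, hΔE]
      rw [← hφ_coassoc, ← hφhat]
      simp only [Category.assoc]
      congr 1
      rw [MonoidalCategory.tensorHom_def]
      simp only [MonoidalCategory.whiskerLeft_comp, comp_whiskerRight, Category.assoc]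
      conv_rhs => rw [whisker_exchange_assoc, whisker_exchange_assoc,
        associator_naturality_right, associator_naturality_middle_assoc]
    rw [hu _ h1, hu _ h2]
  · obtain ⟨f, hf, hu⟩ := huniv (𝟙_ C) (ρ_ X).inv
    have h1 : coev ≫ (X ◁ (φhat ≫ ε₀)) = (ρ_ X).inv := by
      rw [MonoidalCategory.whiskerLeft_comp, ← Category.assoc, hφhat, hφ_counit]
    rw [hu _ h1, hu _ hεE]
end

section
/- Let C be a monoidal category, D a category, and F : D ⥤ C a functor such that cohom(F X, F Y) exists for all objects X, Y of D. Fix an object M of C. Then the transposition μ ↦ μ′, where μ′_X : cohom(F X, F X) ⟶ M is the transpose of μ_X : F X ⟶ F X ⊗ M, defines a bijection between the set of natural transformations μ : F ⟶ F ⊗ M (families μ_X : F X ⟶ F X ⊗ M with (F f ⊗ id_M) ∘ μ_X = μ_Y ∘ F f for all f : X ⟶ Y) and the set of cowedges with vertex M over the bifunctor (X,Y) ↦ cohom(F X, F Y). -/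
open CategoryTheory MonoidalCategory

/-- Let `F : D ⥤ C` be a functor into a monoidal category such that all
cohomomorphism objects `E X Y = cohom(F X, F Y)` exist (with coevaluations `coev` and
universal property `huniv`).  For `f : X ⟶ Y`, `cov f : E X Y ⟶ E Y Y` is the
covariantly induced map (transpose of `F f ≫ coev Y Y`) and `con f : E X Y ⟶ E X X` the
contravariantly induced map (transpose of `coev X X ≫ (F f ▷ E X X)`).  Then for a fixed
object `M`, transposition gives a bijection between natural transformations
`F ⟶ F ⊗ M` and cowedges with vertex `M` over the bifunctor `(X,Y) ↦ cohom(F X, F Y)`. -/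
theorem stmt6 {D : Type*} [Category D] {C : Type*} [Category C] [MonoidalCategory C]
    (F : D ⥤ C) (E : D → D → C)
    (coev : ∀ X Y : D, F.obj X ⟶ F.obj Y ⊗ E X Y)
    (huniv : ∀ (X Y : D) (W : C) (φ : F.obj X ⟶ F.obj Y ⊗ W),
      ∃! f : E X Y ⟶ W, coev X Y ≫ (F.obj Y ◁ f) = φ)
    (cov : ∀ {X Y : D}, (X ⟶ Y) → (E X Y ⟶ E Y Y))
    (hcov : ∀ {X Y : D} (f : X ⟶ Y),
      coev X Y ≫ (F.obj Y ◁ cov f) = F.map f ≫ coev Y Y)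
    (con : ∀ {X Y : D}, (X ⟶ Y) → (E X Y ⟶ E X X))
    (hcon : ∀ {X Y : D} (f : X ⟶ Y),
      coev X Y ≫ (F.obj Y ◁ con f) = coev X X ≫ (F.map f ▷ E X X))
    (M : C) :
    ∃ e : {μ : ∀ X : D, F.obj X ⟶ F.obj X ⊗ M //
            ∀ {X Y : D} (f : X ⟶ Y), μ X ≫ (F.map f ▷ M) = F.map f ≫ μ Y} ≃
          {μ' : ∀ X : D, E X X ⟶ M //
            ∀ {X Y : D} (f : X ⟶ Y), cov f ≫ μ' Y = con f ≫ μ' X},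
      ∀ (μ : {μ : ∀ X : D, F.obj X ⟶ F.obj X ⊗ M //
            ∀ {X Y : D} (f : X ⟶ Y), μ X ≫ (F.map f ▷ M) = F.map f ≫ μ Y}) (X : D),
        coev X X ≫ (F.obj X ◁ (e μ).1 X) = μ.1 X := by
  classical
  -- transpose
  set t : ∀ (X Y : D) (W : C) (φ : F.obj X ⟶ F.obj Y ⊗ W), E X Y ⟶ W :=
    fun X Y W φ => (huniv X Y W φ).choose with ht
  have ht1 : ∀ (X Y : D) (W : C) (φ : F.obj X ⟶ F.obj Y ⊗ W),
      coev X Y ≫ (F.obj Y ◁ t X Y W φ) = φ := fun X Y W φ => (huniv X Y W φ).choose_spec.1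
  have ht2 : ∀ (X Y : D) (W : C) (φ : F.obj X ⟶ F.obj Y ⊗ W) (g : E X Y ⟶ W),
      coev X Y ≫ (F.obj Y ◁ g) = φ → g = t X Y W φ :=
    fun X Y W φ g h => (huniv X Y W φ).choose_spec.2 g h
  refine ⟨{
    toFun := fun μ => ⟨fun X => t X X M (μ.1 X), ?_⟩
    invFun := fun μ' => ⟨fun X => coev X X ≫ (F.obj X ◁ μ'.1 X), ?_⟩
    left_inv := ?_
    right_inv := ?_ }, ?_⟩
  · intro X Y f
    have h1 : coev X Y ≫ (F.obj Y ◁ (cov f ≫ t Y Y M (μ.1 Y))) = F.map f ≫ μ.1 Y := by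
      rw [MonoidalCategory.whiskerLeft_comp, ← Category.assoc, hcov, Category.assoc,
        ht1]
    have h2 : coev X Y ≫ (F.obj Y ◁ (con f ≫ t X X M (μ.1 X))) = F.map f ≫ μ.1 Y := by
      rw [MonoidalCategory.whiskerLeft_comp, ← Category.assoc, hcon, Category.assoc,
        ← whisker_exchange, ← Category.assoc, ht1, μ.2 f]
    rw [ht2 X Y M (F.map f ≫ μ.1 Y) _ h1, ht2 X Y M (F.map f ≫ μ.1 Y) _ h2]
  · intro X Y f
    calc (coev X X ≫ (F.obj X ◁ μ'.1 X)) ≫ (F.map f ▷ M)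
        = coev X X ≫ (F.map f ▷ E X X) ≫ (F.obj Y ◁ μ'.1 X) := by
          rw [Category.assoc, whisker_exchange]
      _ = coev X Y ≫ (F.obj Y ◁ (con f ≫ μ'.1 X)) := by
          rw [MonoidalCategory.whiskerLeft_comp, ← Category.assoc (coev X Y), hcon,
            Category.assoc]
      _ = coev X Y ≫ (F.obj Y ◁ (cov f ≫ μ'.1 Y)) := by rw [μ'.2 f]
      _ = F.map f ≫ coev Y Y ≫ (F.obj Y ◁ μ'.1 Y) := by
          rw [MonoidalCategory.whiskerLeft_comp, ← Category.assoc (coev X Y), hcov,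
            Category.assoc]
  · intro μ
    ext X
    simp only
    rw [ht1]
  · intro μ'
    ext X
    simp only
    exact (ht2 X X M _ (μ'.1 X) rfl).symm
  · intro μ X
    exact ht1 X X M (μ.1 X)
end

section
/- Let C be a monoidal category, D a category, F : D ⥤ C a functor such that cohom(F X, F Y) exists for all X, Y in D, and suppose an initial cowedge (c, ι) over the bifunctor (X,Y) ↦ cohom(F X, F Y) exists (the coend of F). Define δ_X := (id_{F X} ⊗ ι_X) ∘ coev_{F X, F X} : F X ⟶ F X ⊗ c. Then for every object M of C, the map Hom_C(c, M) → Nat(F, F ⊗ M) sending ψ to the family X ↦ (id_{F X} ⊗ ψ) ∘ δ_X is a bijection; equivalently, every natural transformation φ : F ⟶ F ⊗ M factors as φ_X = (id_{F X} ⊗ ψ) ∘ δ_X for a unique ψ : c ⟶ M. -/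
open CategoryTheory MonoidalCategory

/-- Setup as in Statement 6: `F : D ⥤ C`, cohomomorphism objects
`E X Y = cohom(F X, F Y)` with coevaluations `coev` (universal property `huniv`) and the
induced covariant (`cov`) and contravariant (`con`) maps.  Let `(c, ι)` be an initial
cowedge over `(X,Y) ↦ cohom(F X, F Y)` (the coend of `F`), and set
`δ X := coev X X ≫ (F.obj X ◁ ι X)`.  Then for every `M` the map
`Hom(c, M) → Nat(F, F ⊗ M)`, `ψ ↦ (X ↦ δ X ≫ (F.obj X ◁ ψ))`, is a bijection:
its values are natural transformations, and every natural transformation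
`φ : F ⟶ F ⊗ M` factors as `φ X = δ X ≫ (F.obj X ◁ ψ)` for a unique `ψ : c ⟶ M`. -/
theorem stmt7 {D : Type*} [Category D] {C : Type*} [Category C] [MonoidalCategory C]
    (F : D ⥤ C) (E : D → D → C)
    (coev : ∀ X Y : D, F.obj X ⟶ F.obj Y ⊗ E X Y)
    (huniv : ∀ (X Y : D) (W : C) (φ : F.obj X ⟶ F.obj Y ⊗ W),
      ∃! f : E X Y ⟶ W, coev X Y ≫ (F.obj Y ◁ f) = φ)
    (cov : ∀ {X Y : D}, (X ⟶ Y) → (E X Y ⟶ E Y Y))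
    (hcov : ∀ {X Y : D} (f : X ⟶ Y),
      coev X Y ≫ (F.obj Y ◁ cov f) = F.map f ≫ coev Y Y)
    (con : ∀ {X Y : D}, (X ⟶ Y) → (E X Y ⟶ E X X))
    (hcon : ∀ {X Y : D} (f : X ⟶ Y),
      coev X Y ≫ (F.obj Y ◁ con f) = coev X X ≫ (F.map f ▷ E X X))
    (c : C) (ι : ∀ X : D, E X X ⟶ c)
    (hι : ∀ {X Y : D} (f : X ⟶ Y), cov f ≫ ι Y = con f ≫ ι X)
    (hinit : ∀ (M : C) (μ' : ∀ X : D, E X X ⟶ M),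
      (∀ {X Y : D} (f : X ⟶ Y), cov f ≫ μ' Y = con f ≫ μ' X) →
      ∃! ψ : c ⟶ M, ∀ X : D, ι X ≫ ψ = μ' X) :
    -- for every `ψ : c ⟶ M` the induced family is a natural transformation `F ⟶ F ⊗ M`
    (∀ (M : C) (ψ : c ⟶ M) {X Y : D} (f : X ⟶ Y),
      ((coev X X ≫ (F.obj X ◁ ι X)) ≫ (F.obj X ◁ ψ)) ≫ (F.map f ▷ M) =
        F.map f ≫ ((coev Y Y ≫ (F.obj Y ◁ ι Y)) ≫ (F.obj Y ◁ ψ))) ∧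
    -- and every natural transformation `φ : F ⟶ F ⊗ M` arises this way from a unique `ψ`
    (∀ (M : C) (φ : ∀ X : D, F.obj X ⟶ F.obj X ⊗ M),
      (∀ {X Y : D} (f : X ⟶ Y), φ X ≫ (F.map f ▷ M) = F.map f ≫ φ Y) →
      ∃! ψ : c ⟶ M, ∀ X : D,
        (coev X X ≫ (F.obj X ◁ ι X)) ≫ (F.obj X ◁ ψ) = φ X) := by
  constructor
  · intro M ψ X Y f
    calc ((coev X X ≫ (F.obj X ◁ ι X)) ≫ (F.obj X ◁ ψ)) ≫ (F.map f ▷ M)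
        = coev X X ≫ (F.obj X ◁ (ι X ≫ ψ)) ≫ (F.map f ▷ M) := by
          simp [MonoidalCategory.whiskerLeft_comp]
      _ = coev X X ≫ (F.map f ▷ E X X) ≫ (F.obj Y ◁ (ι X ≫ ψ)) := by
          rw [whisker_exchange]
      _ = coev X Y ≫ (F.obj Y ◁ con f) ≫ (F.obj Y ◁ (ι X ≫ ψ)) := by
          rw [← Category.assoc, ← hcon, Category.assoc]
      _ = coev X Y ≫ (F.obj Y ◁ (cov f ≫ ι Y ≫ ψ)) := by
          rw [← MonoidalCategory.whiskerLeft_comp]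
          congr 2
          rw [← Category.assoc, ← hι, Category.assoc]
      _ = F.map f ≫ (coev Y Y ≫ (F.obj Y ◁ ι Y)) ≫ (F.obj Y ◁ ψ) := by
          rw [MonoidalCategory.whiskerLeft_comp, MonoidalCategory.whiskerLeft_comp,
            ← Category.assoc, hcov]
          simp
  · intro M φ hφ
    choose μ hμ0 hμu0 using fun X => huniv X X M (φ X)
    have hμ : ∀ X, coev X X ≫ (F.obj X ◁ μ X) = φ X := hμ0
    have hμu : ∀ X (y : E X X ⟶ M), coev X X ≫ (F.obj X ◁ y) = φ X → y = μ X := hμu0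
    have hwedge : ∀ {X Y : D} (f : X ⟶ Y), cov f ≫ μ Y = con f ≫ μ X := by
      intro X Y f
      have h1 : coev X Y ≫ (F.obj Y ◁ (cov f ≫ μ Y)) = F.map f ≫ φ Y := by
        rw [MonoidalCategory.whiskerLeft_comp, ← Category.assoc, hcov, Category.assoc, hμ]
      have h2 : coev X Y ≫ (F.obj Y ◁ (con f ≫ μ X)) = F.map f ≫ φ Y := by
        rw [MonoidalCategory.whiskerLeft_comp, ← Category.assoc, hcon, Category.assoc,
          ← whisker_exchange, ← Category.assoc, hμ, hφ]
      obtain ⟨g, -, hu⟩ := huniv X Y M (F.map f ≫ φ Y)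
      rw [hu _ h1, hu _ h2]
    obtain ⟨ψ, hψ, hψu⟩ := hinit M μ hwedge
    refine ⟨ψ, fun X => ?_, fun ψ' hψ' => ?_⟩
    · rw [Category.assoc, ← MonoidalCategory.whiskerLeft_comp, hψ, hμ]
    · refine hψu ψ' fun X => ?_
      refine hμu X (ι X ≫ ψ') ?_
      rw [MonoidalCategory.whiskerLeft_comp, ← Category.assoc]
      simpa using hψ' X
end

section
/- Let C be a monoidal category, D a category, F : D ⥤ C a functor such that cohom(F X, F Y) exists for all X, Y in D, and let (c, ι) be an initial cowedge over the bifunctor (X,Y) ↦ cohom(F X, F Y). Then the family δ_X := (id_{F X} ⊗ ι_X) ∘ coev_{F X, F X} : F X ⟶ F X ⊗ c is a natural transformation: for every f : X ⟶ Y in D, (F f ⊗ id_c) ∘ δ_X = δ_Y ∘ F f. -/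
open CategoryTheory MonoidalCategory

/-- Setup as in Statements 6–7: `F : D ⥤ C`, cohomomorphism objects
`E X Y = cohom(F X, F Y)` with coevaluations `coev` (universal property `huniv`), the
induced covariant (`cov`) and contravariant (`con`) maps, and `(c, ι)` an initial cowedge
over `(X,Y) ↦ cohom(F X, F Y)`.  Then the family `δ X := coev X X ≫ (F.obj X ◁ ι X)` is
a natural transformation: `(F f ⊗ id_c) ∘ δ X = δ Y ∘ F f` for every `f : X ⟶ Y`. -/
theorem stmt8 {D : Type*} [Category D] {C : Type*} [Category C] [MonoidalCategory C]
    (F : D ⥤ C) (E : D → D → C)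
    (coev : ∀ X Y : D, F.obj X ⟶ F.obj Y ⊗ E X Y)
    (huniv : ∀ (X Y : D) (W : C) (φ : F.obj X ⟶ F.obj Y ⊗ W),
      ∃! f : E X Y ⟶ W, coev X Y ≫ (F.obj Y ◁ f) = φ)
    (cov : ∀ {X Y : D}, (X ⟶ Y) → (E X Y ⟶ E Y Y))
    (hcov : ∀ {X Y : D} (f : X ⟶ Y),
      coev X Y ≫ (F.obj Y ◁ cov f) = F.map f ≫ coev Y Y)
    (con : ∀ {X Y : D}, (X ⟶ Y) → (E X Y ⟶ E X X))
    (hcon : ∀ {X Y : D} (f : X ⟶ Y),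
      coev X Y ≫ (F.obj Y ◁ con f) = coev X X ≫ (F.map f ▷ E X X))
    (c : C) (ι : ∀ X : D, E X X ⟶ c)
    (hι : ∀ {X Y : D} (f : X ⟶ Y), cov f ≫ ι Y = con f ≫ ι X)
    (hinit : ∀ (M : C) (μ' : ∀ X : D, E X X ⟶ M),
      (∀ {X Y : D} (f : X ⟶ Y), cov f ≫ μ' Y = con f ≫ μ' X) →
      ∃! ψ : c ⟶ M, ∀ X : D, ι X ≫ ψ = μ' X) :
    ∀ {X Y : D} (f : X ⟶ Y),
      (coev X X ≫ (F.obj X ◁ ι X)) ≫ (F.map f ▷ c) =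
        F.map f ≫ (coev Y Y ≫ (F.obj Y ◁ ι Y)) := by
  intro X Y f
  calc (coev X X ≫ (F.obj X ◁ ι X)) ≫ (F.map f ▷ c)
      = coev X X ≫ (F.map f ▷ E X X) ≫ (F.obj Y ◁ ι X) := by
        rw [Category.assoc, whisker_exchange]
    _ = coev X Y ≫ (F.obj Y ◁ (con f ≫ ι X)) := by
        rw [← Category.assoc, ← hcon, MonoidalCategory.whiskerLeft_comp, Category.assoc]
    _ = coev X Y ≫ (F.obj Y ◁ (cov f ≫ ι Y)) := by rw [hι]
    _ = F.map f ≫ (coev Y Y ≫ (F.obj Y ◁ ι Y)) := by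
        rw [MonoidalCategory.whiskerLeft_comp, ← Category.assoc, hcov, Category.assoc]
end

section
/- Let C be a monoidal category, D a category, F : D ⥤ C a functor such that cohom(F X, F Y) exists for all X, Y in D, and let (c, ι) be an initial cowedge over the bifunctor (X,Y) ↦ cohom(F X, F Y). For each X let (Δ_X, ε_X) be the canonical comonoid structure on cohom(F X, F X) (Δ_X the transpose of α ∘ (coev ⊗ id) ∘ coev, ε_X the transpose of the inverse right unitor of F X). Then the family X ↦ (ι_X ⊗ ι_X) ∘ Δ_X is a cowedge with vertex c ⊗ c and the family X ↦ ε_X is a cowedge with vertex 𝟙; the induced morphisms Δ_c : c ⟶ c ⊗ c and ε_c : c ⟶ 𝟙 make (c, Δ_c, ε_c) a comonoid in C, and every ι_X : cohom(F X, F X) ⟶ c is a morphism of comonoids. -/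
open CategoryTheory MonoidalCategory

set_option maxHeartbeats 1600000 in
/-- Setup as in Statements 6–8: `F : D ⥤ C`, cohomomorphism objects
`E X Y = cohom(F X, F Y)` with coevaluations `coev` (universal property `huniv`), induced
maps `cov`, `con`, and `(c, ι)` an initial cowedge.  For each `X`, let `(Δ X, ε X)` be
the canonical comonoid structure on `E X X` (`Δ X` the transpose of
`α ∘ (coev ⊗ id) ∘ coev`, `ε X` the transpose of the inverse right unitor of `F X`).
Then `X ↦ Δ X ≫ (ι X ⊗ₘ ι X)` is a cowedge with vertex `c ⊗ c`, `X ↦ ε X` is a cowedge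
with vertex `𝟙`, the induced morphisms `Δc : c ⟶ c ⊗ c`, `εc : c ⟶ 𝟙` make `c` a
comonoid, and every `ι X` is a morphism of comonoids. -/
theorem stmt9 {D : Type*} [Category D] {C : Type*} [Category C] [MonoidalCategory C]
    (F : D ⥤ C) (E : D → D → C)
    (coev : ∀ X Y : D, F.obj X ⟶ F.obj Y ⊗ E X Y)
    (huniv : ∀ (X Y : D) (W : C) (φ : F.obj X ⟶ F.obj Y ⊗ W),
      ∃! f : E X Y ⟶ W, coev X Y ≫ (F.obj Y ◁ f) = φ)
    (cov : ∀ {X Y : D}, (X ⟶ Y) → (E X Y ⟶ E Y Y))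
    (hcov : ∀ {X Y : D} (f : X ⟶ Y),
      coev X Y ≫ (F.obj Y ◁ cov f) = F.map f ≫ coev Y Y)
    (con : ∀ {X Y : D}, (X ⟶ Y) → (E X Y ⟶ E X X))
    (hcon : ∀ {X Y : D} (f : X ⟶ Y),
      coev X Y ≫ (F.obj Y ◁ con f) = coev X X ≫ (F.map f ▷ E X X))
    (c : C) (ι : ∀ X : D, E X X ⟶ c)
    (hι : ∀ {X Y : D} (f : X ⟶ Y), cov f ≫ ι Y = con f ≫ ι X)
    (hinit : ∀ (M : C) (μ' : ∀ X : D, E X X ⟶ M),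
      (∀ {X Y : D} (f : X ⟶ Y), cov f ≫ μ' Y = con f ≫ μ' X) →
      ∃! ψ : c ⟶ M, ∀ X : D, ι X ≫ ψ = μ' X)
    (Δ : ∀ X : D, E X X ⟶ E X X ⊗ E X X)
    (hΔ : ∀ X : D, coev X X ≫ (F.obj X ◁ Δ X) =
      coev X X ≫ (coev X X ▷ E X X) ≫ (α_ (F.obj X) (E X X) (E X X)).hom)
    (ε : ∀ X : D, E X X ⟶ 𝟙_ C)
    (hε : ∀ X : D, coev X X ≫ (F.obj X ◁ ε X) = (ρ_ (F.obj X)).inv) :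
    -- `X ↦ Δ X ≫ (ι X ⊗ₘ ι X)` is a cowedge with vertex `c ⊗ c`:
    (∀ {X Y : D} (f : X ⟶ Y),
      cov f ≫ (Δ Y ≫ (ι Y ⊗ₘ ι Y)) = con f ≫ (Δ X ≫ (ι X ⊗ₘ ι X))) ∧
    -- `X ↦ ε X` is a cowedge with vertex `𝟙_ C`:
    (∀ {X Y : D} (f : X ⟶ Y), cov f ≫ ε Y = con f ≫ ε X) ∧
    -- the induced morphisms make `c` a comonoid and every `ι X` a comonoid morphism:
    (∃ (Δc : c ⟶ c ⊗ c) (εc : c ⟶ 𝟙_ C),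
      (∀ X : D, ι X ≫ Δc = Δ X ≫ (ι X ⊗ₘ ι X)) ∧
      (∀ X : D, ι X ≫ εc = ε X) ∧
      (Δc ≫ (Δc ▷ c) ≫ (α_ c c c).hom = Δc ≫ (c ◁ Δc)) ∧
      (Δc ≫ (εc ▷ c) = (λ_ c).inv) ∧
      (Δc ≫ (c ◁ εc) = (ρ_ c).inv)) := by
  -- Uniqueness of transposes
  have Euniq : ∀ {X Y : D} {W : C} {f g : E X Y ⟶ W},
      coev X Y ≫ (F.obj Y ◁ f) = coev X Y ≫ (F.obj Y ◁ g) → f = g := by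
    intro X Y W f g h
    obtain ⟨u, -, hu⟩ := huniv X Y W (coev X Y ≫ (F.obj Y ◁ g))
    rw [hu f h, hu g rfl]
  -- ε is a cowedge
  have hεw : ∀ {X Y : D} (f : X ⟶ Y), cov f ≫ ε Y = con f ≫ ε X := by
    intro X Y f
    apply Euniq
    calc coev X Y ≫ F.obj Y ◁ (cov f ≫ ε Y)
        = coev X Y ≫ F.obj Y ◁ cov f ≫ F.obj Y ◁ ε Y := by
          simp [MonoidalCategory.whiskerLeft_comp]
      _ = F.map f ≫ coev Y Y ≫ F.obj Y ◁ ε Y := by rw [reassoc_of% hcov f]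
      _ = F.map f ≫ (ρ_ (F.obj Y)).inv := by rw [hε Y]
      _ = (ρ_ (F.obj X)).inv ≫ F.map f ▷ 𝟙_ C := by rw [rightUnitor_inv_naturality]
      _ = coev X X ≫ F.obj X ◁ ε X ≫ F.map f ▷ 𝟙_ C := by
          rw [← Category.assoc, ← hε X, Category.assoc]
      _ = coev X X ≫ F.map f ▷ E X X ≫ F.obj Y ◁ ε X := by rw [whisker_exchange]
      _ = coev X Y ≫ F.obj Y ◁ con f ≫ F.obj Y ◁ ε X := by rw [reassoc_of% hcon f]
      _ = coev X Y ≫ F.obj Y ◁ (con f ≫ ε X) := by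
          simp [MonoidalCategory.whiskerLeft_comp]
  -- Δ ≫ (ι ⊗ ι) is a cowedge
  have hΔw : ∀ {X Y : D} (f : X ⟶ Y),
      cov f ≫ (Δ Y ≫ (ι Y ⊗ₘ ι Y)) = con f ≫ (Δ X ≫ (ι X ⊗ₘ ι X)) := by
    intro X Y f
    apply Euniq
    calc coev X Y ≫ F.obj Y ◁ (cov f ≫ Δ Y ≫ (ι Y ⊗ₘ ι Y))
        = coev X Y ≫ F.obj Y ◁ cov f ≫ F.obj Y ◁ Δ Y ≫ F.obj Y ◁ (ι Y ⊗ₘ ι Y) := by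
          simp [MonoidalCategory.whiskerLeft_comp]
      _ = F.map f ≫ coev Y Y ≫ F.obj Y ◁ Δ Y ≫ F.obj Y ◁ (ι Y ⊗ₘ ι Y) := by
          rw [reassoc_of% hcov f]
      _ = F.map f ≫ coev Y Y ≫ (coev Y Y ▷ E Y Y) ≫
            (α_ (F.obj Y) (E Y Y) (E Y Y)).hom ≫ F.obj Y ◁ (ι Y ⊗ₘ ι Y) := by
          rw [reassoc_of% hΔ Y]
      _ = coev X Y ≫ F.obj Y ◁ cov f ≫ (coev Y Y ▷ E Y Y) ≫
            (α_ (F.obj Y) (E Y Y) (E Y Y)).hom ≫ F.obj Y ◁ (ι Y ⊗ₘ ι Y) := by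
          rw [reassoc_of% hcov f]
      _ = coev X Y ≫ (coev Y Y ▷ E X Y) ≫ ((F.obj Y ⊗ E Y Y) ◁ cov f) ≫
            (α_ (F.obj Y) (E Y Y) (E Y Y)).hom ≫ F.obj Y ◁ (ι Y ⊗ₘ ι Y) := by
          rw [whisker_exchange_assoc]
      _ = coev X Y ≫ (coev Y Y ▷ E X Y) ≫ (α_ (F.obj Y) (E Y Y) (E X Y)).hom ≫
            (F.obj Y ◁ (E Y Y ◁ cov f)) ≫ F.obj Y ◁ (ι Y ⊗ₘ ι Y) := by
          rw [associator_naturality_right_assoc]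
      _ = coev X Y ≫ (coev Y Y ▷ E X Y) ≫ (α_ (F.obj Y) (E Y Y) (E X Y)).hom ≫
            F.obj Y ◁ (ι Y ⊗ₘ (con f ≫ ι X)) := by
          have e1 : (E Y Y ◁ cov f) ≫ (ι Y ⊗ₘ ι Y) = ι Y ⊗ₘ (con f ≫ ι X) := by
            rw [← hι f]; simp [← id_tensorHom, ← tensorHom_id, tensorHom_comp_tensorHom]
          rw [← MonoidalCategory.whiskerLeft_comp, e1]
      _ = coev X Y ≫ (coev Y Y ▷ E X Y) ≫ (α_ (F.obj Y) (E Y Y) (E X Y)).hom ≫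
            (F.obj Y ◁ (E Y Y ◁ con f)) ≫ F.obj Y ◁ (ι Y ⊗ₘ ι X) := by
          have e2 : ι Y ⊗ₘ (con f ≫ ι X) = (E Y Y ◁ con f) ≫ (ι Y ⊗ₘ ι X) := by
            simp [← id_tensorHom, ← tensorHom_id, tensorHom_comp_tensorHom]
          rw [e2, MonoidalCategory.whiskerLeft_comp]
      _ = coev X Y ≫ (coev Y Y ▷ E X Y) ≫ ((F.obj Y ⊗ E Y Y) ◁ con f) ≫
            (α_ (F.obj Y) (E Y Y) (E X X)).hom ≫ F.obj Y ◁ (ι Y ⊗ₘ ι X) := by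
          rw [associator_naturality_right_assoc]
      _ = coev X Y ≫ (F.obj Y ◁ con f) ≫ (coev Y Y ▷ E X X) ≫
            (α_ (F.obj Y) (E Y Y) (E X X)).hom ≫ F.obj Y ◁ (ι Y ⊗ₘ ι X) := by
          rw [whisker_exchange_assoc]
      _ = coev X X ≫ (F.map f ▷ E X X) ≫ (coev Y Y ▷ E X X) ≫
            (α_ (F.obj Y) (E Y Y) (E X X)).hom ≫ F.obj Y ◁ (ι Y ⊗ₘ ι X) := by
          rw [reassoc_of% hcon f]
      _ = coev X X ≫ ((F.map f ≫ coev Y Y) ▷ E X X) ≫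
            (α_ (F.obj Y) (E Y Y) (E X X)).hom ≫ F.obj Y ◁ (ι Y ⊗ₘ ι X) := by
          rw [comp_whiskerRight, Category.assoc]
      _ = coev X X ≫ ((coev X Y ≫ F.obj Y ◁ cov f) ▷ E X X) ≫
            (α_ (F.obj Y) (E Y Y) (E X X)).hom ≫ F.obj Y ◁ (ι Y ⊗ₘ ι X) := by
          rw [hcov f]
      _ = coev X X ≫ (coev X Y ▷ E X X) ≫ ((F.obj Y ◁ cov f) ▷ E X X) ≫
            (α_ (F.obj Y) (E Y Y) (E X X)).hom ≫ F.obj Y ◁ (ι Y ⊗ₘ ι X) := by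
          rw [comp_whiskerRight, Category.assoc]
      _ = coev X X ≫ (coev X Y ▷ E X X) ≫ (α_ (F.obj Y) (E X Y) (E X X)).hom ≫
            (F.obj Y ◁ (cov f ▷ E X X)) ≫ F.obj Y ◁ (ι Y ⊗ₘ ι X) := by
          rw [associator_naturality_middle_assoc]
      _ = coev X X ≫ (coev X Y ▷ E X X) ≫ (α_ (F.obj Y) (E X Y) (E X X)).hom ≫
            F.obj Y ◁ ((cov f ≫ ι Y) ⊗ₘ ι X) := by
          have e3 : (cov f ▷ E X X) ≫ (ι Y ⊗ₘ ι X) = (cov f ≫ ι Y) ⊗ₘ ι X := by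
            simp [← id_tensorHom, ← tensorHom_id, tensorHom_comp_tensorHom]
          rw [← MonoidalCategory.whiskerLeft_comp, e3]
      _ = coev X X ≫ (coev X Y ▷ E X X) ≫ (α_ (F.obj Y) (E X Y) (E X X)).hom ≫
            (F.obj Y ◁ (con f ▷ E X X)) ≫ F.obj Y ◁ (ι X ⊗ₘ ι X) := by
          have e4 : (cov f ≫ ι Y) ⊗ₘ ι X = (con f ▷ E X X) ≫ (ι X ⊗ₘ ι X) := by
            rw [hι f]; simp [← id_tensorHom, ← tensorHom_id, tensorHom_comp_tensorHom]
          rw [e4, MonoidalCategory.whiskerLeft_comp]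
      _ = coev X X ≫ (coev X Y ▷ E X X) ≫ ((F.obj Y ◁ con f) ▷ E X X) ≫
            (α_ (F.obj Y) (E X X) (E X X)).hom ≫ F.obj Y ◁ (ι X ⊗ₘ ι X) := by
          rw [associator_naturality_middle_assoc]
      _ = coev X X ≫ ((coev X Y ≫ F.obj Y ◁ con f) ▷ E X X) ≫
            (α_ (F.obj Y) (E X X) (E X X)).hom ≫ F.obj Y ◁ (ι X ⊗ₘ ι X) := by
          rw [comp_whiskerRight, Category.assoc]
      _ = coev X X ≫ ((coev X X ≫ F.map f ▷ E X X) ▷ E X X) ≫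
            (α_ (F.obj Y) (E X X) (E X X)).hom ≫ F.obj Y ◁ (ι X ⊗ₘ ι X) := by
          rw [hcon f]
      _ = coev X X ≫ (coev X X ▷ E X X) ≫ ((F.map f ▷ E X X) ▷ E X X) ≫
            (α_ (F.obj Y) (E X X) (E X X)).hom ≫ F.obj Y ◁ (ι X ⊗ₘ ι X) := by
          rw [comp_whiskerRight, Category.assoc]
      _ = coev X X ≫ (coev X X ▷ E X X) ≫ (α_ (F.obj X) (E X X) (E X X)).hom ≫
            (F.map f ▷ (E X X ⊗ E X X)) ≫ F.obj Y ◁ (ι X ⊗ₘ ι X) := by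
          rw [associator_naturality_left_assoc]
      _ = coev X X ≫ F.obj X ◁ Δ X ≫
            (F.map f ▷ (E X X ⊗ E X X)) ≫ F.obj Y ◁ (ι X ⊗ₘ ι X) := by
          rw [reassoc_of% hΔ X]
      _ = coev X X ≫ F.obj X ◁ Δ X ≫
            (F.obj X ◁ (ι X ⊗ₘ ι X)) ≫ (F.map f ▷ (c ⊗ c)) := by
          rw [whisker_exchange]
      _ = coev X X ≫ F.obj X ◁ (Δ X ≫ (ι X ⊗ₘ ι X)) ≫ F.map f ▷ (c ⊗ c) := by
          rw [MonoidalCategory.whiskerLeft_comp_assoc]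
      _ = coev X X ≫ F.map f ▷ E X X ≫ F.obj Y ◁ (Δ X ≫ (ι X ⊗ₘ ι X)) := by
          rw [whisker_exchange]
      _ = coev X Y ≫ F.obj Y ◁ con f ≫ F.obj Y ◁ (Δ X ≫ (ι X ⊗ₘ ι X)) := by
          rw [reassoc_of% hcon f]
      _ = coev X Y ≫ F.obj Y ◁ (con f ≫ Δ X ≫ (ι X ⊗ₘ ι X)) := by
          simp [MonoidalCategory.whiskerLeft_comp]
  -- Local comonoid laws on E X X
  have L1 : ∀ X : D, Δ X ≫ (ε X ▷ E X X) = (λ_ (E X X)).inv := by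
    intro X
    apply Euniq
    calc coev X X ≫ F.obj X ◁ (Δ X ≫ ε X ▷ E X X)
        = coev X X ≫ (coev X X ▷ E X X) ≫ (α_ (F.obj X) (E X X) (E X X)).hom ≫
            F.obj X ◁ (ε X ▷ E X X) := by
          rw [MonoidalCategory.whiskerLeft_comp, reassoc_of% hΔ X]
      _ = coev X X ≫ (coev X X ▷ E X X) ≫ ((F.obj X ◁ ε X) ▷ E X X) ≫
            (α_ (F.obj X) (𝟙_ C) (E X X)).hom := by
          rw [associator_naturality_middle]
      _ = coev X X ≫ ((coev X X ≫ F.obj X ◁ ε X) ▷ E X X) ≫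
            (α_ (F.obj X) (𝟙_ C) (E X X)).hom := by
          rw [comp_whiskerRight, Category.assoc]
      _ = coev X X ≫ ((ρ_ (F.obj X)).inv ▷ E X X) ≫
            (α_ (F.obj X) (𝟙_ C) (E X X)).hom := by rw [hε X]
      _ = coev X X ≫ F.obj X ◁ (λ_ (E X X)).inv := by
          congr 1
          monoidal
  have L2 : ∀ X : D, Δ X ≫ (E X X ◁ ε X) = (ρ_ (E X X)).inv := by
    intro X
    apply Euniq
    calc coev X X ≫ F.obj X ◁ (Δ X ≫ E X X ◁ ε X)
        = coev X X ≫ (coev X X ▷ E X X) ≫ (α_ (F.obj X) (E X X) (E X X)).hom ≫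
            F.obj X ◁ (E X X ◁ ε X) := by
          rw [MonoidalCategory.whiskerLeft_comp, reassoc_of% hΔ X]
      _ = coev X X ≫ (coev X X ▷ E X X) ≫ ((F.obj X ⊗ E X X) ◁ ε X) ≫
            (α_ (F.obj X) (E X X) (𝟙_ C)).hom := by
          rw [associator_naturality_right]
      _ = coev X X ≫ (F.obj X ◁ ε X) ≫ (coev X X ▷ 𝟙_ C) ≫
            (α_ (F.obj X) (E X X) (𝟙_ C)).hom := by
          rw [whisker_exchange_assoc]
      _ = (ρ_ (F.obj X)).inv ≫ (coev X X ▷ 𝟙_ C) ≫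
            (α_ (F.obj X) (E X X) (𝟙_ C)).hom := by
          rw [reassoc_of% hε X]
      _ = coev X X ≫ (ρ_ (F.obj X ⊗ E X X)).inv ≫
            (α_ (F.obj X) (E X X) (𝟙_ C)).hom := by
          rw [rightUnitor_inv_naturality_assoc]
      _ = coev X X ≫ F.obj X ◁ (ρ_ (E X X)).inv := by
          congr 1
          monoidal
  have L3 : ∀ X : D, Δ X ≫ (Δ X ▷ E X X) ≫ (α_ (E X X) (E X X) (E X X)).hom =
      Δ X ≫ (E X X ◁ Δ X) := by
    intro X
    apply Euniq
    calc coev X X ≫ F.obj X ◁ (Δ X ≫ (Δ X ▷ E X X) ≫ (α_ (E X X) (E X X) (E X X)).hom)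
        = coev X X ≫ (coev X X ▷ E X X) ≫ (α_ (F.obj X) (E X X) (E X X)).hom ≫
            F.obj X ◁ (Δ X ▷ E X X) ≫ F.obj X ◁ (α_ (E X X) (E X X) (E X X)).hom := by
          rw [MonoidalCategory.whiskerLeft_comp, MonoidalCategory.whiskerLeft_comp,
            reassoc_of% hΔ X]
      _ = coev X X ≫ (coev X X ▷ E X X) ≫ ((F.obj X ◁ Δ X) ▷ E X X) ≫
            (α_ (F.obj X) (E X X ⊗ E X X) (E X X)).hom ≫
            F.obj X ◁ (α_ (E X X) (E X X) (E X X)).hom := by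
          rw [associator_naturality_middle_assoc]
      _ = coev X X ≫ ((coev X X ≫ F.obj X ◁ Δ X) ▷ E X X) ≫
            (α_ (F.obj X) (E X X ⊗ E X X) (E X X)).hom ≫
            F.obj X ◁ (α_ (E X X) (E X X) (E X X)).hom := by
          rw [comp_whiskerRight, Category.assoc]
      _ = coev X X ≫ ((coev X X ≫ (coev X X ▷ E X X) ≫
              (α_ (F.obj X) (E X X) (E X X)).hom) ▷ E X X) ≫
            (α_ (F.obj X) (E X X ⊗ E X X) (E X X)).hom ≫
            F.obj X ◁ (α_ (E X X) (E X X) (E X X)).hom := by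
          rw [hΔ X]
      _ = coev X X ≫ (coev X X ▷ E X X) ≫ ((coev X X ▷ E X X) ▷ E X X) ≫
            ((α_ (F.obj X) (E X X) (E X X)).hom ▷ E X X) ≫
            (α_ (F.obj X) (E X X ⊗ E X X) (E X X)).hom ≫
            F.obj X ◁ (α_ (E X X) (E X X) (E X X)).hom := by
          rw [comp_whiskerRight, comp_whiskerRight, Category.assoc, Category.assoc]
      _ = coev X X ≫ (coev X X ▷ E X X) ≫ ((coev X X ▷ E X X) ▷ E X X) ≫
            (α_ (F.obj X ⊗ E X X) (E X X) (E X X)).hom ≫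
            (α_ (F.obj X) (E X X) (E X X ⊗ E X X)).hom := by
          rw [MonoidalCategory.pentagon]
      _ = coev X X ≫ (coev X X ▷ E X X) ≫ (α_ (F.obj X) (E X X) (E X X)).hom ≫
            (coev X X ▷ (E X X ⊗ E X X)) ≫
            (α_ (F.obj X) (E X X) (E X X ⊗ E X X)).hom := by
          rw [associator_naturality_left_assoc]
      _ = coev X X ≫ (F.obj X ◁ Δ X) ≫ (coev X X ▷ (E X X ⊗ E X X)) ≫
            (α_ (F.obj X) (E X X) (E X X ⊗ E X X)).hom := by
          rw [reassoc_of% hΔ X]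
      _ = coev X X ≫ (coev X X ▷ E X X) ≫ ((F.obj X ⊗ E X X) ◁ Δ X) ≫
            (α_ (F.obj X) (E X X) (E X X ⊗ E X X)).hom := by
          rw [whisker_exchange_assoc]
      _ = coev X X ≫ (coev X X ▷ E X X) ≫ (α_ (F.obj X) (E X X) (E X X)).hom ≫
            F.obj X ◁ (E X X ◁ Δ X) := by
          rw [associator_naturality_right]
      _ = coev X X ≫ F.obj X ◁ (Δ X ≫ E X X ◁ Δ X) := by
          rw [MonoidalCategory.whiskerLeft_comp, reassoc_of% hΔ X]
  -- uniqueness out of c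
  have cuniq : ∀ {M : C} {ψ₁ ψ₂ : c ⟶ M},
      (∀ X, ι X ≫ ψ₁ = ι X ≫ ψ₂) → ψ₁ = ψ₂ := by
    intro M ψ₁ ψ₂ h
    obtain ⟨u, -, hu⟩ := hinit M (fun X => ι X ≫ ψ₂) (by
      intro X Y f
      rw [← Category.assoc, ← Category.assoc, hι f])
    rw [hu ψ₁ (by intro X; exact h X), hu ψ₂ (by intro X; rfl)]
  refine ⟨hΔw, hεw, ?_⟩
  obtain ⟨Δc, hΔc, -⟩ := hinit (c ⊗ c) (fun X => Δ X ≫ (ι X ⊗ₘ ι X)) hΔw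
  obtain ⟨εc, hεc, -⟩ := hinit (𝟙_ C) (fun X => ε X) hεw
  have hΔc' : ∀ X, ι X ≫ Δc = Δ X ≫ (ι X ⊗ₘ ι X) := hΔc
  have hεc' : ∀ X, ι X ≫ εc = ε X := hεc
  refine ⟨Δc, εc, hΔc, hεc, ?_, ?_, ?_⟩
  · apply cuniq
    intro X
    calc ι X ≫ Δc ≫ (Δc ▷ c) ≫ (α_ c c c).hom
        = Δ X ≫ (ι X ⊗ₘ ι X) ≫ (Δc ▷ c) ≫ (α_ c c c).hom := by
          rw [reassoc_of% hΔc' X]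
      _ = Δ X ≫ ((ι X ≫ Δc) ⊗ₘ ι X) ≫ (α_ c c c).hom := by
          have t1 : (ι X ⊗ₘ ι X) ≫ (Δc ▷ c) = (ι X ≫ Δc) ⊗ₘ ι X := by
            simp [← id_tensorHom, ← tensorHom_id, tensorHom_comp_tensorHom]
          rw [reassoc_of% t1]
      _ = Δ X ≫ ((Δ X ≫ (ι X ⊗ₘ ι X)) ⊗ₘ ι X) ≫ (α_ c c c).hom := by rw [hΔc' X]
      _ = Δ X ≫ (Δ X ▷ E X X) ≫ (((ι X ⊗ₘ ι X) ⊗ₘ ι X) ≫ (α_ c c c).hom) := by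
          have t2 : (Δ X ≫ (ι X ⊗ₘ ι X)) ⊗ₘ ι X =
              (Δ X ▷ E X X) ≫ ((ι X ⊗ₘ ι X) ⊗ₘ ι X) := by
            rw [← tensorHom_id, tensorHom_comp_tensorHom, Category.id_comp]
          rw [t2]
          simp only [Category.assoc]
      _ = Δ X ≫ (Δ X ▷ E X X) ≫ (α_ (E X X) (E X X) (E X X)).hom ≫
            (ι X ⊗ₘ (ι X ⊗ₘ ι X)) := by
          rw [associator_naturality]
      _ = Δ X ≫ (E X X ◁ Δ X) ≫ (ι X ⊗ₘ (ι X ⊗ₘ ι X)) := by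
          rw [reassoc_of% L3 X]
      _ = Δ X ≫ (ι X ⊗ₘ (Δ X ≫ (ι X ⊗ₘ ι X))) := by
          have t3 : (E X X ◁ Δ X) ≫ (ι X ⊗ₘ (ι X ⊗ₘ ι X)) =
              ι X ⊗ₘ (Δ X ≫ (ι X ⊗ₘ ι X)) := by
            simp [← id_tensorHom, ← tensorHom_id, tensorHom_comp_tensorHom]
          rw [t3]
      _ = Δ X ≫ (ι X ⊗ₘ (ι X ≫ Δc)) := by rw [hΔc' X]
      _ = Δ X ≫ (ι X ⊗ₘ ι X) ≫ (c ◁ Δc) := by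
          have t4 : ι X ⊗ₘ (ι X ≫ Δc) = (ι X ⊗ₘ ι X) ≫ (c ◁ Δc) := by
            simp [← id_tensorHom, ← tensorHom_id, tensorHom_comp_tensorHom]
          rw [t4]
      _ = ι X ≫ Δc ≫ (c ◁ Δc) := by rw [reassoc_of% hΔc' X]
  · apply cuniq
    intro X
    calc ι X ≫ Δc ≫ (εc ▷ c)
        = Δ X ≫ (ι X ⊗ₘ ι X) ≫ (εc ▷ c) := by rw [reassoc_of% hΔc' X]
      _ = Δ X ≫ ((ι X ≫ εc) ⊗ₘ ι X) := by
          have s1 : (ι X ⊗ₘ ι X) ≫ (εc ▷ c) = (ι X ≫ εc) ⊗ₘ ι X := by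
            simp [← id_tensorHom, ← tensorHom_id, tensorHom_comp_tensorHom]
          rw [s1]
      _ = Δ X ≫ (ε X ⊗ₘ ι X) := by rw [hεc' X]
      _ = Δ X ≫ (ε X ▷ E X X) ≫ (𝟙_ C ◁ ι X) := by
          rw [MonoidalCategory.tensorHom_def]
      _ = (λ_ (E X X)).inv ≫ (𝟙_ C ◁ ι X) := by rw [reassoc_of% L1 X]
      _ = ι X ≫ (λ_ c).inv := by rw [leftUnitor_inv_naturality]
  · apply cuniq
    intro X
    calc ι X ≫ Δc ≫ (c ◁ εc)
        = Δ X ≫ (ι X ⊗ₘ ι X) ≫ (c ◁ εc) := by rw [reassoc_of% hΔc' X]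
      _ = Δ X ≫ (ι X ⊗ₘ (ι X ≫ εc)) := by
          have s2 : (ι X ⊗ₘ ι X) ≫ (c ◁ εc) = ι X ⊗ₘ (ι X ≫ εc) := by
            simp [← id_tensorHom, ← tensorHom_id, tensorHom_comp_tensorHom]
          rw [s2]
      _ = Δ X ≫ (ι X ⊗ₘ ε X) := by rw [hεc' X]
      _ = Δ X ≫ (E X X ◁ ε X) ≫ (ι X ▷ 𝟙_ C) := by
          rw [tensorHom_def']
      _ = (ρ_ (E X X)).inv ≫ (ι X ▷ 𝟙_ C) := by rw [reassoc_of% L2 X]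
      _ = ι X ≫ (ρ_ c).inv := by rw [rightUnitor_inv_naturality]
end

section
/- Let C be a monoidal category, D a category, F : D ⥤ C a functor such that cohom(F X, F Y) exists for all X, Y in D, let (c, ι) be an initial cowedge over the bifunctor (X,Y) ↦ cohom(F X, F Y), and equip c with the comonoid structure (Δ_c, ε_c) induced from the canonical comonoid structures on the cohom(F X, F X). Then for every object X of D, the object F X with coaction δ_X := (id_{F X} ⊗ ι_X) ∘ coev_{F X, F X} is a right comodule over the comonoid (c, Δ_c, ε_c). -/
open CategoryTheory MonoidalCategory

/-- Setup as in Statements 6–9: `F : D ⥤ C`, cohomomorphism objects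
`E X Y = cohom(F X, F Y)` with coevaluations `coev` (universal property `huniv`), induced
maps `cov`, `con`, `(c, ι)` an initial cowedge, canonical comonoid structures
`(Δ X, ε X)` on each `E X X`, and `(Δc, εc)` the induced comonoid structure on `c` (the
unique one making every `ι X` a comonoid morphism).  Then for every `X`, the object
`F.obj X` with coaction `δ X := coev X X ≫ (F.obj X ◁ ι X)` is a right comodule over
the comonoid `(c, Δc, εc)`. -/
theorem stmt10 {D : Type*} [Category D] {C : Type*} [Category C] [MonoidalCategory C]
    (F : D ⥤ C) (E : D → D → C)
    (coev : ∀ X Y : D, F.obj X ⟶ F.obj Y ⊗ E X Y)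
    (huniv : ∀ (X Y : D) (W : C) (φ : F.obj X ⟶ F.obj Y ⊗ W),
      ∃! f : E X Y ⟶ W, coev X Y ≫ (F.obj Y ◁ f) = φ)
    (cov : ∀ {X Y : D}, (X ⟶ Y) → (E X Y ⟶ E Y Y))
    (hcov : ∀ {X Y : D} (f : X ⟶ Y),
      coev X Y ≫ (F.obj Y ◁ cov f) = F.map f ≫ coev Y Y)
    (con : ∀ {X Y : D}, (X ⟶ Y) → (E X Y ⟶ E X X))
    (hcon : ∀ {X Y : D} (f : X ⟶ Y),
      coev X Y ≫ (F.obj Y ◁ con f) = coev X X ≫ (F.map f ▷ E X X))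
    (c : C) (ι : ∀ X : D, E X X ⟶ c)
    (hι : ∀ {X Y : D} (f : X ⟶ Y), cov f ≫ ι Y = con f ≫ ι X)
    (hinit : ∀ (M : C) (μ' : ∀ X : D, E X X ⟶ M),
      (∀ {X Y : D} (f : X ⟶ Y), cov f ≫ μ' Y = con f ≫ μ' X) →
      ∃! ψ : c ⟶ M, ∀ X : D, ι X ≫ ψ = μ' X)
    (Δ : ∀ X : D, E X X ⟶ E X X ⊗ E X X)
    (hΔ : ∀ X : D, coev X X ≫ (F.obj X ◁ Δ X) =
      coev X X ≫ (coev X X ▷ E X X) ≫ (α_ (F.obj X) (E X X) (E X X)).hom)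
    (ε : ∀ X : D, E X X ⟶ 𝟙_ C)
    (hε : ∀ X : D, coev X X ≫ (F.obj X ◁ ε X) = (ρ_ (F.obj X)).inv)
    (Δc : c ⟶ c ⊗ c) (εc : c ⟶ 𝟙_ C)
    (hΔc : ∀ X : D, ι X ≫ Δc = Δ X ≫ (ι X ⊗ₘ ι X))
    (hεc : ∀ X : D, ι X ≫ εc = ε X) :
    ∀ X : D,
      ((coev X X ≫ (F.obj X ◁ ι X)) ≫ ((coev X X ≫ (F.obj X ◁ ι X)) ▷ c) ≫
          (α_ (F.obj X) c c).hom =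
        (coev X X ≫ (F.obj X ◁ ι X)) ≫ (F.obj X ◁ Δc)) ∧
      ((coev X X ≫ (F.obj X ◁ ι X)) ≫ (F.obj X ◁ εc) = (ρ_ (F.obj X)).inv) := by

  intro X
  constructor
  · calc (coev X X ≫ (F.obj X ◁ ι X)) ≫ ((coev X X ≫ (F.obj X ◁ ι X)) ▷ c) ≫
          (α_ (F.obj X) c c).hom
        = coev X X ≫ (coev X X ▷ E X X) ≫ (α_ (F.obj X) (E X X) (E X X)).hom ≫
            (F.obj X ◁ (ι X ⊗ₘ ι X)) := by
          rw [MonoidalCategory.comp_whiskerRight]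
          slice_lhs 2 3 => rw [whisker_exchange]
          slice_lhs 3 4 => rw [whisker_exchange]
          slice_lhs 4 5 => rw [associator_naturality_right]
          slice_lhs 3 4 => rw [associator_naturality_middle]
          simp [MonoidalCategory.tensorHom_def]
    _ = (coev X X ≫ (F.obj X ◁ ι X)) ≫ (F.obj X ◁ Δc) := by
          rw [Category.assoc, ← MonoidalCategory.whiskerLeft_comp, hΔc X,
            MonoidalCategory.whiskerLeft_comp]
          slice_rhs 1 2 => rw [hΔ X]
          simp
  · rw [Category.assoc, ← MonoidalCategory.whiskerLeft_comp, hεc X, hε X]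
end

section
/- Let C be a monoidal category, (C₀, Δ, ε) a comonoid in C, (X, ρ_X) a right C₀-comodule, and Y an object such that E := cohom(X,Y) exists with coevaluation coev : X ⟶ Y ⊗ E. Let ρ^r : E ⟶ E ⊗ C₀ be the unique morphism with (id_Y ⊗ ρ^r) ∘ coev = α_{Y,E,C₀} ∘ (coev ⊗ id_{C₀}) ∘ ρ_X. Then ρ^r is a right C₀-comodule coaction on E: α ∘ (ρ^r ⊗ id_{C₀}) ∘ ρ^r = (id_E ⊗ Δ) ∘ ρ^r and (id_E ⊗ ε) ∘ ρ^r equals the inverse right unitor of E. -/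
open CategoryTheory MonoidalCategory

/-- Let `(C₀, Δ, ε)` be a comonoid in a monoidal category, `(X, ρX)` a
right `C₀`-comodule, and `Y` an object such that `E := cohom(X,Y)` exists with
coevaluation `coev : X ⟶ Y ⊗ E` (universal property `huniv`).  Let `ρr : E ⟶ E ⊗ C₀`
be the (unique) morphism with `(id_Y ⊗ ρr) ∘ coev = α ∘ (coev ⊗ id) ∘ ρX`.  Then `ρr`
is a right `C₀`-comodule coaction on `E`. -/
theorem stmt11 {C : Type*} [Category C] [MonoidalCategory C]
    (C₀ : C) (Δ : C₀ ⟶ C₀ ⊗ C₀) (ε : C₀ ⟶ 𝟙_ C)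
    (hΔ : Δ ≫ (Δ ▷ C₀) ≫ (α_ C₀ C₀ C₀).hom = Δ ≫ (C₀ ◁ Δ))
    (hεl : Δ ≫ (ε ▷ C₀) = (λ_ C₀).inv)
    (hεr : Δ ≫ (C₀ ◁ ε) = (ρ_ C₀).inv)
    (X : C) (ρX : X ⟶ X ⊗ C₀)
    (hρX_coassoc : ρX ≫ (ρX ▷ C₀) ≫ (α_ X C₀ C₀).hom = ρX ≫ (X ◁ Δ))
    (hρX_counit : ρX ≫ (X ◁ ε) = (ρ_ X).inv)
    (Y E : C) (coev : X ⟶ Y ⊗ E)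
    (huniv : ∀ (W : C) (φ : X ⟶ Y ⊗ W), ∃! f : E ⟶ W, coev ≫ (Y ◁ f) = φ)
    (ρr : E ⟶ E ⊗ C₀)
    (hρr : coev ≫ (Y ◁ ρr) = ρX ≫ (coev ▷ C₀) ≫ (α_ Y E C₀).hom) :
    ρr ≫ (ρr ▷ C₀) ≫ (α_ E C₀ C₀).hom = ρr ≫ (E ◁ Δ) ∧
    ρr ≫ (E ◁ ε) = (ρ_ E).inv := by
  constructor
  · obtain ⟨f, -, hf⟩ := huniv (E ⊗ C₀ ⊗ C₀)
      (ρX ≫ (X ◁ Δ) ≫ (coev ▷ (C₀ ⊗ C₀)) ≫ (α_ Y E (C₀ ⊗ C₀)).hom)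
    have h1 : coev ≫ (Y ◁ (ρr ≫ (ρr ▷ C₀) ≫ (α_ E C₀ C₀).hom)) =
        ρX ≫ (X ◁ Δ) ≫ (coev ▷ (C₀ ⊗ C₀)) ≫ (α_ Y E (C₀ ⊗ C₀)).hom := by
      calc coev ≫ (Y ◁ (ρr ≫ (ρr ▷ C₀) ≫ (α_ E C₀ C₀).hom))
          = (coev ≫ (Y ◁ ρr)) ≫ (Y ◁ (ρr ▷ C₀)) ≫ (Y ◁ (α_ E C₀ C₀).hom) := by
            simp [MonoidalCategory.whiskerLeft_comp]
        _ = ρX ≫ (coev ▷ C₀) ≫ ((Y ◁ ρr) ▷ C₀) ≫ (α_ Y (E ⊗ C₀) C₀).hom ≫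
              (Y ◁ (α_ E C₀ C₀).hom) := by
            rw [hρr]; simp [associator_naturality_middle_assoc]
        _ = ρX ≫ (ρX ▷ C₀) ≫ ((coev ▷ C₀) ▷ C₀) ≫ ((α_ Y E C₀).hom ▷ C₀) ≫
              (α_ Y (E ⊗ C₀) C₀).hom ≫ (Y ◁ (α_ E C₀ C₀).hom) := by
            simp only [← comp_whiskerRight_assoc, hρr]
        _ = ρX ≫ (ρX ▷ C₀) ≫ ((coev ▷ C₀) ▷ C₀) ≫ (α_ (Y ⊗ E) C₀ C₀).hom ≫
              (α_ Y E (C₀ ⊗ C₀)).hom := by rw [pentagon]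
        _ = ρX ≫ (ρX ▷ C₀) ≫ (α_ X C₀ C₀).hom ≫ (coev ▷ (C₀ ⊗ C₀)) ≫
              (α_ Y E (C₀ ⊗ C₀)).hom := by
            rw [associator_naturality_left_assoc]
        _ = ρX ≫ (X ◁ Δ) ≫ (coev ▷ (C₀ ⊗ C₀)) ≫ (α_ Y E (C₀ ⊗ C₀)).hom := by
            rw [reassoc_of% hρX_coassoc]
    have h2 : coev ≫ (Y ◁ (ρr ≫ (E ◁ Δ))) =
        ρX ≫ (X ◁ Δ) ≫ (coev ▷ (C₀ ⊗ C₀)) ≫ (α_ Y E (C₀ ⊗ C₀)).hom := by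
      calc coev ≫ (Y ◁ (ρr ≫ (E ◁ Δ)))
          = (coev ≫ (Y ◁ ρr)) ≫ (Y ◁ (E ◁ Δ)) := by
            simp [MonoidalCategory.whiskerLeft_comp]
        _ = ρX ≫ (coev ▷ C₀) ≫ ((Y ⊗ E) ◁ Δ) ≫ (α_ Y E (C₀ ⊗ C₀)).hom := by
            rw [hρr]; simp [associator_naturality_right]
        _ = ρX ≫ (X ◁ Δ) ≫ (coev ▷ (C₀ ⊗ C₀)) ≫ (α_ Y E (C₀ ⊗ C₀)).hom := by
            rw [whisker_exchange_assoc]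
    rw [hf _ h1, hf _ h2]
  · obtain ⟨f, -, hf⟩ := huniv E coev
    have h1 : coev ≫ (Y ◁ (ρr ≫ (E ◁ ε) ≫ (ρ_ E).hom)) = coev := by
      calc coev ≫ (Y ◁ (ρr ≫ (E ◁ ε) ≫ (ρ_ E).hom))
          = (coev ≫ (Y ◁ ρr)) ≫ (Y ◁ (E ◁ ε)) ≫ (Y ◁ (ρ_ E).hom) := by
            simp [MonoidalCategory.whiskerLeft_comp]
        _ = ρX ≫ (coev ▷ C₀) ≫ ((Y ⊗ E) ◁ ε) ≫ (α_ Y E (𝟙_ C)).hom ≫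
              (Y ◁ (ρ_ E).hom) := by
            rw [hρr]; simp [associator_naturality_right]
        _ = ρX ≫ (X ◁ ε) ≫ (coev ▷ (𝟙_ C)) ≫ (ρ_ (Y ⊗ E)).hom := by
            rw [whisker_exchange_assoc]; simp
        _ = coev := by rw [reassoc_of% hρX_counit]; simp
    have h2 : coev ≫ (Y ◁ (𝟙 E)) = coev := by simp
    have := (hf _ h1).trans (hf _ h2).symm
    rw [← cancel_mono (ρ_ E).hom]; simpa using this
end
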